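/- The polytope P is a zonotope: P equals the Minkowski sum {w} + S_1 + S_2 + ⋯ + S_n, where S_m = { s · y_m v_m : 0 ≤ s ≤ 1 } is the line segment from 0 to y_m v_m. -/

import Mathlib

open Finset

/-- The `m`-th coordinate (1-based, for `1 ≤ m ≤ n−1`) of a vector `x ∈ ℝ^{n−1}`. -/
noncomputable def coord (n : ℕ) (x : Fin (n - 1) → ℝ) (m : ℕ) : ℝ :=
  if h : 1 ≤ m ∧ m ≤ n - 1 then x ⟨m - 1, by omega⟩ else 0

/-- The vectors `v_1 = e_1`, `v_m = e_m − e_{m−1}` for `2 ≤ m ≤ n−1`, `v_n = −e_{n−1}`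
in `ℝ^{n−1}` (coordinates indexed by `Fin (n−1)`, so `e_m` has `1` in slot `m−1`). -/
def stdV (n : ℕ) (m : ℕ) : Fin (n - 1) → ℝ := fun i =>
  (if (i : ℕ) + 1 = m then (1 : ℝ) else 0) - (if (i : ℕ) + 2 = m then (1 : ℝ) else 0)

/-- The vector `w = y_2 e_1 + y_3 e_2 + ⋯ + y_n e_{n−1}`. -/
def wVec (n : ℕ) (y : ℕ → ℝ) : Fin (n - 1) → ℝ := fun i => y ((i : ℕ) + 2)

/-- The polytope `P ⊆ ℝ^{n−1}`: the set of `x` such that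
`y_{j+1} + ⋯ + y_{k−1} ≤ x_j + ⋯ + x_{k−1} ≤ y_j + ⋯ + y_k` for all `1 ≤ j < k ≤ n`. -/
noncomputable def polyP (n : ℕ) (y : ℕ → ℝ) : Set (Fin (n - 1) → ℝ) :=
  { x | ∀ j k : ℕ, 1 ≤ j → j < k → k ≤ n →
      (∑ m ∈ Icc (j + 1) (k - 1), y m) ≤ (∑ m ∈ Icc j (k - 1), coord n x m) ∧
      (∑ m ∈ Icc j (k - 1), coord n x m) ≤ (∑ m ∈ Icc j k, y m) }

/-- The zonotope `Q = { w + Σ_{m=1}^{n} t_m y_m v_m : 0 ≤ t_m ≤ 1 }`. -/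
def polyQ (n : ℕ) (y : ℕ → ℝ) : Set (Fin (n - 1) → ℝ) :=
  { x | ∃ t : ℕ → ℝ, (∀ m, 0 ≤ t m ∧ t m ≤ 1) ∧
      x = wVec n y + ∑ m ∈ Icc 1 n, (t m * y m) • stdV n m }

/-- The parallelohedron `Q_j = { w + Σ_{m ≠ j} t_m y_m v_m : 0 ≤ t_m ≤ 1 }`. -/
def polyQj (n : ℕ) (y : ℕ → ℝ) (j : ℕ) : Set (Fin (n - 1) → ℝ) :=
  { x | ∃ t : ℕ → ℝ, (∀ m, 0 ≤ t m ∧ t m ≤ 1) ∧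
      x = wVec n y + ∑ m ∈ (Icc 1 n).erase j, (t m * y m) • stdV n m }

open Pointwise

section Helpers

lemma mem_finsetSum {ι E : Type*} [DecidableEq ι] [AddCommMonoid E] (s : Finset ι)
    (S : ι → Set E) (a : E) :
    a ∈ ∑ i ∈ s, S i ↔ ∃ f : ι → E, (∀ i ∈ s, f i ∈ S i) ∧ a = ∑ i ∈ s, f i := by
  induction s using Finset.cons_induction generalizing a with
  | empty =>
    simp only [Finset.sum_empty, Finset.notMem_empty, IsEmpty.forall_iff, forall_const, true_and,
      Set.mem_zero]
    exact ⟨fun h => ⟨fun _ => 0, fun _ => trivial, h⟩, fun ⟨f, _, h⟩ => h⟩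
  | cons j s hj ih =>
    rw [Finset.sum_cons, Set.mem_add]
    constructor
    · rintro ⟨u, hu, v, hv, rfl⟩
      obtain ⟨f, hf, rfl⟩ := (ih v).mp hv
      refine ⟨Function.update f j u, ?_, ?_⟩
      · intro i hi
        rcases Finset.mem_cons.mp hi with h | hi'
        · subst h; simpa using hu
        · have hne : i ≠ j := by rintro rfl; exact hj hi'
          rw [Function.update_of_ne hne]; exact hf i hi'
      · rw [Finset.sum_cons, Function.update_self]
        congr 1
        refine Finset.sum_congr rfl fun i hi => ?_
        have hne : i ≠ j := by rintro rfl; exact hj hi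
        rw [Function.update_of_ne hne]
    · rintro ⟨f, hf, rfl⟩
      rw [Finset.sum_cons]
      exact ⟨f j, hf j (Finset.mem_cons_self _ _), _,
        (ih _).mpr ⟨f, fun i hi => hf i (Finset.mem_cons.mpr (Or.inr hi)), rfl⟩, rfl⟩

lemma sum_smul_stdV (n : ℕ) (c : ℕ → ℝ) (i : Fin (n - 1)) :
    (∑ m ∈ Icc 1 n, c m • stdV n m) i = c ((i : ℕ) + 1) - c ((i : ℕ) + 2) := by
  have hi := i.isLt
  have h1 : (i : ℕ) + 1 ∈ Icc 1 n := by simp [Finset.mem_Icc]; omega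
  have h2 : (i : ℕ) + 2 ∈ Icc 1 n := by simp [Finset.mem_Icc]; omega
  rw [Finset.sum_apply]
  simp only [Pi.smul_apply, stdV, smul_eq_mul, mul_sub, Finset.sum_sub_distrib, mul_ite,
    mul_one, mul_zero]
  rw [Finset.sum_ite_eq, Finset.sum_ite_eq, if_pos h1, if_pos h2]

lemma coord_w_add (n : ℕ) (y c : ℕ → ℝ) (m : ℕ) (hm1 : 1 ≤ m) (hm2 : m ≤ n - 1) :
    coord n (wVec n y + ∑ m' ∈ Icc 1 n, c m' • stdV n m') m
      = y (m + 1) + (c m - c (m + 1)) := by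
  rw [coord, dif_pos ⟨hm1, hm2⟩]
  rw [Pi.add_apply, sum_smul_stdV, wVec]
  have e1 : (m - 1) + 1 = m := by omega
  have e2 : (m - 1) + 2 = m + 1 := by omega
  rw [e1, e2]

lemma telescope (c : ℕ → ℝ) {j k : ℕ} (h : j ≤ k) :
    ∑ m ∈ Ico j k, (c m - c (m + 1)) = c j - c k := by
  rw [Finset.sum_Ico_eq_sum_range]
  have := Finset.sum_range_sub' (f := fun i => c (j + i)) (n := k - j)
  calc ∑ i ∈ range (k - j), (c (j + i) - c (j + i + 1))
      = ∑ i ∈ range (k - j), (c (j + i) - c (j + (i + 1))) := by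
        refine Finset.sum_congr rfl fun i _ => by rw [Nat.add_assoc]
    _ = c (j + 0) - c (j + (k - j)) := this
    _ = c j - c k := by rw [Nat.add_zero, Nat.add_sub_cancel' h]

lemma shiftsum (y : ℕ → ℝ) (j k : ℕ) :
    ∑ m ∈ Ico j k, y (m + 1) = ∑ m ∈ Ioc j k, y m := by
  rw [← Finset.Ico_add_one_add_one_eq_Ioc, Finset.sum_Ico_eq_sum_range, Finset.sum_Ico_eq_sum_range]
  rw [show k + 1 - (j + 1) = k - j by omega]
  exact Finset.sum_congr rfl fun i _ => congrArg y (by omega)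

lemma Icc_pred_eq_Ico (j k : ℕ) (hk : 1 ≤ k) : Icc j (k - 1) = Ico j k := by
  ext m; simp only [Finset.mem_Icc, Finset.mem_Ico]; omega

lemma sum_coord_w_add (n : ℕ) (y c : ℕ → ℝ) (j k : ℕ) (hj : 1 ≤ j) (hjk : j < k)
    (hkn : k ≤ n) :
    ∑ m ∈ Ico j k, coord n (wVec n y + ∑ m' ∈ Icc 1 n, c m' • stdV n m') m
      = (∑ m ∈ Ioc j k, y m) + (c j - c k) := by
  have : ∀ m ∈ Ico j k, coord n (wVec n y + ∑ m' ∈ Icc 1 n, c m' • stdV n m') m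
      = y (m + 1) + (c m - c (m + 1)) := by
    intro m hm
    rw [Finset.mem_Ico] at hm
    exact coord_w_add n y c m (by omega) (by omega)
  rw [Finset.sum_congr rfl this, Finset.sum_add_distrib, telescope c (le_of_lt hjk),
    shiftsum]

lemma Ioc_split (y : ℕ → ℝ) {j k : ℕ} (h : j < k) :
    ∑ m ∈ Ioc j k, y m = (∑ m ∈ Ioo j k, y m) + y k := by
  have : Ioc j k = insert k (Ioo j k) := by
    ext m; simp only [Finset.mem_Ioc, Finset.mem_insert, Finset.mem_Ioo]; omega
  rw [this, Finset.sum_insert (by simp [Finset.mem_Ioo]), add_comm]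

lemma Icc_split (y : ℕ → ℝ) {j k : ℕ} (h : j ≤ k) :
    ∑ m ∈ Icc j k, y m = y j + ∑ m ∈ Ioc j k, y m := by
  have : Icc j k = insert j (Ioc j k) := by
    ext m; simp only [Finset.mem_Icc, Finset.mem_insert, Finset.mem_Ioc]; omega
  rw [this, Finset.sum_insert (by simp [Finset.mem_Ioc])]

end Helpers

/-- `P` is a zonotope: `P = {w} + S_1 + ⋯ + S_n` (Minkowski sum), where
`S_m = { s • (y_m v_m) : 0 ≤ s ≤ 1 }` is the segment from `0` to `y_m v_m`. -/
theorem statement12 (n : ℕ) (hn : 2 ≤ n) (y : ℕ → ℝ)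
    (hy : ∀ m, 1 ≤ m → m ≤ n → 0 < y m) :
    polyP n y =
      {wVec n y} + ∑ m ∈ Icc 1 n,
        ({ z | ∃ s : ℝ, 0 ≤ s ∧ s ≤ 1 ∧ z = s • (y m • stdV n m) } :
          Set (Fin (n - 1) → ℝ)) := by
  have hchar : ∀ x : Fin (n - 1) → ℝ,
      (x ∈ {wVec n y} + ∑ m ∈ Icc 1 n,
        ({ z | ∃ s : ℝ, 0 ≤ s ∧ s ≤ 1 ∧ z = s • (y m • stdV n m) } :
          Set (Fin (n - 1) → ℝ)))
      ↔ ∃ t : ℕ → ℝ, (∀ m ∈ Icc 1 n, 0 ≤ t m ∧ t m ≤ 1) ∧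
          x = wVec n y + ∑ m ∈ Icc 1 n, (t m * y m) • stdV n m := by
    intro x
    rw [Set.mem_add]
    constructor
    · rintro ⟨u, hu, v, hv, hx⟩
      rw [Set.mem_singleton_iff] at hu
      subst hu
      obtain ⟨f, hf, rfl⟩ := (mem_finsetSum _ _ _).mp hv
      have hch : ∀ m, ∃ s : ℝ,
          m ∈ Icc 1 n → (0 ≤ s ∧ s ≤ 1 ∧ f m = s • (y m • stdV n m)) := by
        intro m
        by_cases h : m ∈ Icc 1 n
        · obtain ⟨s, h1, h2, h3⟩ := hf m h
          exact ⟨s, fun _ => ⟨h1, h2, h3⟩⟩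
        · exact ⟨0, fun h' => absurd h' h⟩
      choose t ht using hch
      refine ⟨t, fun m hm => ⟨(ht m hm).1, (ht m hm).2.1⟩, ?_⟩
      rw [← hx]
      congr 1
      exact Finset.sum_congr rfl fun m hm => by rw [(ht m hm).2.2, smul_smul]
    · rintro ⟨t, ht, rfl⟩
      refine ⟨wVec n y, rfl, _, (mem_finsetSum _ _ _).mpr
        ⟨fun m => (t m * y m) • stdV n m, fun m hm =>
          ⟨t m, (ht m hm).1, (ht m hm).2, by rw [smul_smul]⟩, rfl⟩, rfl⟩
  ext x
  rw [hchar]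
  constructor
  · -- P ⊆ zonotope
    intro hx
    -- hx : x ∈ polyP n y
    set A : ℕ → ℝ := fun j => ∑ m ∈ Ico j n, coord n x m with hA
    set g : ℕ → ℝ := fun j => (∑ m ∈ Ioc j n, y m) - A j with hg
    have hne : (Icc 1 n).Nonempty := ⟨1, by simp [Finset.mem_Icc]; omega⟩
    set c : ℝ := (Icc 1 n).sup' hne g with hc
    -- key: g j' ≤ g m + y m for all j', m in [1, n]
    have key : ∀ j' ∈ Icc 1 n, ∀ m ∈ Icc 1 n, g j' ≤ g m + y m := by
      intro j' hj' m hm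
      rw [Finset.mem_Icc] at hj' hm
      rcases lt_trichotomy j' m with h | h | h
      · -- j' < m : uses left P inequality at (j', m)
        have hP := (hx j' m hj'.1 h hm.2).1
        rw [Icc_pred_eq_Ico j' m (by omega)] at hP
        have hyy : ∑ i ∈ Ioc j' n, y i = (∑ i ∈ Ioc j' m, y i) + ∑ i ∈ Ioc m n, y i := by
          rw [Finset.sum_Ioc_consecutive _ (le_of_lt h) hm.2]
        have hAA : A j' = (∑ i ∈ Ico j' m, coord n x i) + A m := by
          rw [hA]; rw [Finset.sum_Ico_consecutive _ (le_of_lt h) hm.2]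
        have hsplit : ∑ i ∈ Ioc j' m, y i = (∑ i ∈ Ioo j' m, y i) + y m := Ioc_split y h
        have hIoo : ∑ i ∈ Ioo j' m, y i = ∑ i ∈ Icc (j' + 1) (m - 1), y i := by
          congr 1; ext i; simp only [Finset.mem_Ioo, Finset.mem_Icc]; omega
        rw [hg]
        simp only []
        rw [hyy, hAA, hsplit, hIoo]
        linarith
      · rw [h]
        linarith [hy m hm.1 hm.2]
      · -- m < j' : uses right P inequality at (m, j')
        have hP := (hx m j' hm.1 h hj'.2).2
        rw [Icc_pred_eq_Ico m j' (by omega)] at hP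
        have hyy : ∑ i ∈ Ioc m n, y i = (∑ i ∈ Ioc m j', y i) + ∑ i ∈ Ioc j' n, y i := by
          rw [Finset.sum_Ioc_consecutive _ (le_of_lt h) hj'.2]
        have hAA : A m = (∑ i ∈ Ico m j', coord n x i) + A j' := by
          rw [hA]; rw [Finset.sum_Ico_consecutive _ (le_of_lt h) hj'.2]
        have hsplit : ∑ i ∈ Icc m j', y i = y m + ∑ i ∈ Ioc m j', y i :=
          Icc_split y (le_of_lt h)
        rw [hg]
        simp only []
        rw [hyy, hAA]
        linarith [hsplit ▸ hP]
    -- now define t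
    have hcbound : ∀ m ∈ Icc 1 n, g m ≤ c := fun m hm => Finset.le_sup' g hm
    have hcle : ∀ m ∈ Icc 1 n, c ≤ g m + y m := fun m hm =>
      Finset.sup'_le _ _ (fun j' hj' => key j' hj' m hm)
    set t : ℕ → ℝ := fun m => (c - g m) / y m with hT
    have hty : ∀ m, 1 ≤ m → m ≤ n → t m * y m = c - g m := by
      intro m h1 h2
      rw [hT]
      exact div_mul_cancel₀ _ (ne_of_gt (hy m h1 h2))
    refine ⟨t, ?_, ?_⟩
    · intro m hm
      have hm' := hm
      rw [Finset.mem_Icc] at hm'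
      have hym := hy m hm'.1 hm'.2
      constructor
      · apply div_nonneg _ hym.le
        linarith [hcbound m hm]
      · rw [hT]
        simp only []
        rw [div_le_one hym]
        linarith [hcle m hm]
    · funext i
      have hi := i.isLt
      have hs : (∑ m ∈ Icc 1 n, (t m * y m) • stdV n m) i
          = t ((i : ℕ) + 1) * y ((i : ℕ) + 1) - t ((i : ℕ) + 2) * y ((i : ℕ) + 2) :=
        sum_smul_stdV n (fun m => t m * y m) i
      rw [Pi.add_apply, hs]
      have hv1 : t ((i : ℕ) + 1) * y ((i : ℕ) + 1) = c - g ((i : ℕ) + 1) :=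
        hty _ (by omega) (by omega)
      have hv2 : t ((i : ℕ) + 2) * y ((i : ℕ) + 2) = c - g ((i : ℕ) + 2) :=
        hty _ (by omega) (by omega)
      have hA12 : A ((i : ℕ) + 1) = coord n x ((i : ℕ) + 1) + A ((i : ℕ) + 2) := by
        rw [hA]
        simp only []
        rw [← Finset.sum_Ico_consecutive (fun m => coord n x m)
          (show (i : ℕ) + 1 ≤ (i : ℕ) + 2 by omega) (show (i : ℕ) + 2 ≤ n by omega)]
        congr 1
        have : Ico ((i : ℕ) + 1) ((i : ℕ) + 2) = {(i : ℕ) + 1} := by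
          ext m; simp only [Finset.mem_Ico, Finset.mem_singleton]; omega
        rw [this, Finset.sum_singleton]
      have hy12 : ∑ m ∈ Ioc ((i : ℕ) + 1) n, y m
          = y ((i : ℕ) + 2) + ∑ m ∈ Ioc ((i : ℕ) + 2) n, y m := by
        rw [← Finset.sum_Ioc_consecutive (fun m => y m)
          (show (i : ℕ) + 1 ≤ (i : ℕ) + 2 by omega) (show (i : ℕ) + 2 ≤ n by omega)]
        congr 1
        have : Ioc ((i : ℕ) + 1) ((i : ℕ) + 2) = {(i : ℕ) + 2} := by
          ext m; simp only [Finset.mem_Ioc, Finset.mem_singleton]; omega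
        rw [this, Finset.sum_singleton]
      have hcoord : coord n x ((i : ℕ) + 1) = x i := by
        rw [coord, dif_pos ⟨by omega, by omega⟩]
        congr 1
      have hg1 : g ((i : ℕ) + 1) = (∑ m ∈ Ioc ((i : ℕ) + 1) n, y m) - A ((i : ℕ) + 1) := rfl
      have hg2 : g ((i : ℕ) + 2) = (∑ m ∈ Ioc ((i : ℕ) + 2) n, y m) - A ((i : ℕ) + 2) := rfl
      have hw : wVec n y i = y ((i : ℕ) + 2) := rfl
      rw [hv1, hv2, hw]
      rw [hg1, hg2, hA12, hy12, hcoord]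
      ring
  · -- zonotope ⊆ P
    rintro ⟨t, ht, rfl⟩
    intro j k hj hjk hkn
    have hjI : j ∈ Icc 1 n := by rw [Finset.mem_Icc]; omega
    have hkI : k ∈ Icc 1 n := by rw [Finset.mem_Icc]; omega
    have hsum : ∑ m ∈ Ico j k,
          coord n (wVec n y + ∑ m' ∈ Icc 1 n, (t m' * y m') • stdV n m') m
        = (∑ m ∈ Ioc j k, y m) + (t j * y j - t k * y k) :=
      sum_coord_w_add n y (fun m => t m * y m) j k hj hjk hkn
    rw [Icc_pred_eq_Ico j k (by omega), hsum]
    have hIoo : ∑ i ∈ Icc (j + 1) (k - 1), y i = ∑ i ∈ Ioo j k, y i := by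
      congr 1; ext i; simp only [Finset.mem_Ioo, Finset.mem_Icc]; omega
    have h1 : ∑ m ∈ Ioc j k, y m = (∑ m ∈ Ioo j k, y m) + y k := Ioc_split y hjk
    have h2 : ∑ m ∈ Icc j k, y m = y j + ∑ m ∈ Ioc j k, y m := Icc_split y (le_of_lt hjk)
    have hyj : 0 < y j := hy j hj (by omega)
    have hyk : 0 < y k := hy k (by omega) hkn
    have htj := ht j hjI
    have htk := ht k hkI
    have p1 : 0 ≤ t j * y j := mul_nonneg htj.1 hyj.le
    have p2 : t k * y k ≤ y k := by nlinarith [htk.2, hyk.le]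
    have p3 : 0 ≤ t k * y k := mul_nonneg htk.1 hyk.le
    have p4 : t j * y j ≤ y j := by nlinarith [htj.2, hyj.le]
    constructor
    · rw [hIoo, h1]
      linarith
    · rw [h2]
      linarith
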